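/- Let g : (0,2π) → ℝ (or ℂ) be a bounded measurable function with sup |g| = M, and define r(φ) = −(1/2)(1 − e^{iφ}) ∫_π^φ g(ζ)/(1 − cos ζ) dζ for φ ∈ (0,2π). Then |r(φ)| ≤ M for all φ ∈ (0,2π). -/

import Mathlib

open Real Complex Set

lemma one_sub_cos_eq {ζ : ℝ} : 1 - Real.cos ζ = 2 * Real.sin (ζ/2) ^ 2 := by
  have h1 := Real.cos_sq (ζ/2)
  rw [show 2*(ζ/2) = ζ by ring] at h1
  have h2 := Real.sin_sq_add_cos_sq (ζ/2)
  linarith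

lemma hasDeriv_aux {ζ : ℝ} (h : ζ ∈ Set.Ioo (0:ℝ) (2 * π)) :
    HasDerivAt (fun x => -(Real.cos (x/2) / Real.sin (x/2))) (1 / (1 - Real.cos ζ)) ζ := by
  have hs : 0 < Real.sin (ζ/2) := Real.sin_pos_of_pos_of_lt_pi (by linarith [h.1]) (by linarith [h.2])
  have hhalf : HasDerivAt (fun x : ℝ => x / 2) (1/2 : ℝ) ζ := by
    simpa using (hasDerivAt_id ζ).div_const 2
  have hc : HasDerivAt (fun x => Real.cos (x/2)) (-Real.sin (ζ/2) * (1/2)) ζ :=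
    (Real.hasDerivAt_cos (ζ/2)).comp (h₂ := Real.cos) ζ hhalf
  have hsin : HasDerivAt (fun x => Real.sin (x/2)) (Real.cos (ζ/2) * (1/2)) ζ :=
    (Real.hasDerivAt_sin (ζ/2)).comp (h₂ := Real.sin) ζ hhalf
  have hd : HasDerivAt (fun x => -(Real.cos (x/2) / Real.sin (x/2))) _ ζ := ((hc.div hsin hs.ne').neg)
  convert hd using 1
  have hpyth := Real.sin_sq_add_cos_sq (ζ/2)
  rw [one_sub_cos_eq]
  field_simp
  nlinarith [hs]

/-- For `g` bounded measurable with `|g| ≤ M` on `(0,2π)`, the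
function `r(φ) = −(1/2)(1 − e^{iφ}) ∫_π^φ g(ζ)/(1 − cos ζ) dζ` satisfies
`|r(φ)| ≤ M` on `(0,2π)`. -/
theorem abs_r_le (g : ℝ → ℝ) (M : ℝ) (hmeas : Measurable g)
    (hbd : ∀ ζ ∈ Set.Ioo (0:ℝ) (2 * π), |g ζ| ≤ M) :
    ∀ φ ∈ Set.Ioo (0:ℝ) (2 * π),
      ‖(-(1 / 2) * (1 - Complex.exp (Complex.I * (φ : ℂ))) *
        ((∫ ζ in π..φ, g ζ / (1 - Real.cos ζ) : ℝ) : ℂ))‖ ≤ M := by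
  intro φ hφ
  have hπ : π ∈ Set.Ioo (0:ℝ) (2 * π) := ⟨pi_pos, by linarith [pi_pos]⟩
  have hM : 0 ≤ M := le_trans (abs_nonneg _) (hbd π hπ)
  have hsub : Set.uIcc π φ ⊆ Set.Ioo 0 (2 * π) := by
    intro x hx
    rw [Set.mem_uIcc] at hx
    rcases hx with ⟨h1, h2⟩ | ⟨h1, h2⟩ <;>
      exact ⟨by linarith [hφ.1, hπ.1], by linarith [hφ.2, hπ.2]⟩
  have hpos : ∀ x ∈ Set.uIcc π φ, 0 < 1 - Real.cos x := by
    intro x hx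
    have hx' := hsub hx
    have hs : 0 < Real.sin (x/2) :=
      Real.sin_pos_of_pos_of_lt_pi (by linarith [hx'.1]) (by linarith [hx'.2])
    rw [one_sub_cos_eq]
    positivity
  have hcont : ContinuousOn (fun x => 1 / (1 - Real.cos x)) (Set.uIcc π φ) := by
    apply ContinuousOn.div continuousOn_const
    · exact (continuous_const.sub Real.continuous_cos).continuousOn
    · intro x hx; exact (hpos x hx).ne'
  have hint1 : IntervalIntegrable (fun x => 1 / (1 - Real.cos x)) MeasureTheory.volume π φ :=
    hcont.intervalIntegrable
  have hintM : IntervalIntegrable (fun x => M * (1 / (1 - Real.cos x))) MeasureTheory.volume π φ :=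
    (hcont.const_smul M).intervalIntegrable
  have hsφ : 0 < Real.sin (φ/2) :=
    Real.sin_pos_of_pos_of_lt_pi (by linarith [hφ.1]) (by linarith [hφ.2])
  have hFTC : (∫ x in π..φ, 1 / (1 - Real.cos x)) = -(Real.cos (φ/2) / Real.sin (φ/2)) := by
    have := intervalIntegral.integral_eq_sub_of_hasDerivAt
      (f := fun x => -(Real.cos (x/2) / Real.sin (x/2)))
      (fun x hx => hasDeriv_aux (hsub hx)) hint1
    rw [this]
    simp [Real.cos_pi_div_two]
  -- bound the integral
  have hbound : |∫ ζ in π..φ, g ζ / (1 - Real.cos ζ)| ≤ M * (|Real.cos (φ/2)| / Real.sin (φ/2)) := by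
    have h1 : ‖∫ ζ in π..φ, g ζ / (1 - Real.cos ζ)‖ ≤
        |∫ ζ in π..φ, M * (1 / (1 - Real.cos ζ))| := by
      apply intervalIntegral.norm_integral_le_abs_of_norm_le _ hintM
      filter_upwards [MeasureTheory.ae_restrict_mem measurableSet_uIoc] with t ht
      have ht' : t ∈ Set.uIcc π φ := Set.uIoc_subset_uIcc ht
      have hp := hpos t ht'
      have hgt : |g t| ≤ M := hbd t (hsub ht')
      rw [Real.norm_eq_abs, abs_div, abs_of_pos hp]
      rw [mul_one_div]
      gcongr
    calc |∫ ζ in π..φ, g ζ / (1 - Real.cos ζ)|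
        ≤ |∫ ζ in π..φ, M * (1 / (1 - Real.cos ζ))| := h1
      _ = M * (|Real.cos (φ/2)| / Real.sin (φ/2)) := by
          rw [intervalIntegral.integral_const_mul, hFTC, abs_mul, _root_.abs_of_nonneg hM,
            abs_neg, abs_div, abs_of_pos hsφ]
  -- norm of 1 - e^{iφ}
  have hA : ‖1 - Complex.exp (Complex.I * (φ:ℂ))‖ = 2 * Real.sin (φ/2) := by
    have hre : (1 - Complex.exp (Complex.I * (φ:ℂ))).re = 1 - Real.cos φ := by
      rw [mul_comm]
      simp [Complex.exp_ofReal_mul_I_re]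
    have him : (1 - Complex.exp (Complex.I * (φ:ℂ))).im = -Real.sin φ := by
      rw [mul_comm]
      simp [Complex.exp_ofReal_mul_I_im]
    have h2 : ‖1 - Complex.exp (Complex.I * (φ:ℂ))‖ ^ 2 = (2 * Real.sin (φ/2)) ^ 2 := by
      rw [Complex.sq_norm, Complex.normSq_apply, hre, him]
      have hp := Real.sin_sq_add_cos_sq φ
      have ho := one_sub_cos_eq (ζ := φ)
      nlinarith
    have := norm_nonneg (1 - Complex.exp (Complex.I * (φ:ℂ)))
    nlinarith
  -- finish
  rw [norm_mul, norm_mul, Complex.norm_real, Real.norm_eq_abs, hA]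
  have habs : ‖(-(1/2) : ℂ)‖ = 1/2 := by
    norm_num
  rw [habs]
  have hcos : |Real.cos (φ/2)| ≤ 1 := Real.abs_cos_le_one _
  calc 1/2 * (2 * Real.sin (φ/2)) * |∫ ζ in π..φ, g ζ / (1 - Real.cos ζ)|
      ≤ 1/2 * (2 * Real.sin (φ/2)) * (M * (|Real.cos (φ/2)| / Real.sin (φ/2))) := by
        apply mul_le_mul_of_nonneg_left hbound
        positivity
    _ = M * |Real.cos (φ/2)| := by field_simp
    _ ≤ M := by nlinarith
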